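/- Let $\Gamma$ be a finite tree, $r \geq 1$, and for each vertex $v$ let $T_v \in \mathbb{Z}^{V(\Gamma)}$ be the vector that is $-\ell_v r$ in coordinate $v$ (where $\ell_v$ is the valence of $v$), $r$ in each coordinate adjacent to $v$, and $0$ elsewhere. Then a path $P(w,v_1,\dots,v_m)$ (endpoint $w + \sum_i T_{v_i}$) is minimal among all paths from $w$ to its endpoint if and only if not every vertex of $\Gamma$ occurs among $v_1,\dots,v_m$; moreover in this case the multiset $\{v_1,\dots,v_m\}$ is uniquely determined by the endpoint, so the path is unique up to reordering. -/
import Mathlib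


open SimpleGraph

/-- The translation vector `T_v ∈ ℤ^{V(Γ)}`: entry `-ℓ_v r` at `v` (`ℓ_v` the
valence of `v`), entry `r` at each neighbor of `v`, and `0` elsewhere. -/
def Tvec {V : Type*} [Fintype V] [DecidableEq V] (G : SimpleGraph V)
    [DecidableRel G.Adj] (r : ℕ) (v : V) : V → ℤ :=
  fun u => if u = v then -(G.degree v * r : ℤ) else if G.Adj v u then (r : ℤ) else 0

section Aux

variable {V : Type*} [Fintype V] [DecidableEq V]

/-- A discrete harmonic integer function on a connected graph is constant. -/
lemma harmonic_const (G : SimpleGraph V) [DecidableRel G.Adj] (hc : G.Preconnected)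
    (f : V → ℤ)
    (hf : ∀ u, ∑ v ∈ G.neighborFinset u, f v = (G.degree u : ℤ) * f u) :
    ∀ a b, f a = f b := by
  intro a b
  haveI : Nonempty V := ⟨a⟩
  obtain ⟨u0, -, hmax⟩ := Finset.exists_max_image Finset.univ f Finset.univ_nonempty
  have step : ∀ u v : V, G.Adj u v → f u = f u0 → f v = f u0 := by
    intro u v huv hu
    by_contra hv
    have hvlt : f v < f u0 := lt_of_le_of_ne (hmax v (Finset.mem_univ v)) hv
    have hlt : ∑ x ∈ G.neighborFinset u, f x < ∑ _x ∈ G.neighborFinset u, f u0 := by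
      refine Finset.sum_lt_sum (fun i _ => hmax i (Finset.mem_univ i)) ⟨v, ?_, hvlt⟩
      rwa [SimpleGraph.mem_neighborFinset]
    rw [hf u, Finset.sum_const, SimpleGraph.card_neighborFinset_eq_degree, hu,
      nsmul_eq_mul] at hlt
    exact lt_irrefl _ hlt
  have reach : ∀ (x y : V), G.Walk x y → f x = f u0 → f y = f u0 := by
    intro x y p
    induction p with
    | nil => exact id
    | cons h _ ih => exact fun hx => ih (step _ _ h hx)
  obtain ⟨pa⟩ := hc u0 a
  obtain ⟨pb⟩ := hc u0 b
  rw [reach u0 a pa rfl, reach u0 b pb rfl]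

lemma Tvec_apply_eq (G : SimpleGraph V) [DecidableRel G.Adj] (r : ℕ) (g : V → ℤ) (u v : V) :
    g v * Tvec G r v u
      = (if v = u then -(g u * ((G.degree u : ℤ) * (r : ℤ))) else 0)
        + (if G.Adj u v then g v * (r : ℤ) else 0) := by
  simp only [Tvec]
  rcases eq_or_ne v u with h | h
  · subst h
    simp [G.irrefl, mul_neg]
  · have h1 : ¬ u = v := fun hh => h hh.symm
    simp only [if_neg h1, if_neg h, mul_ite, mul_zero, zero_add]
    exact if_congr (G.adj_comm v u) rfl rfl

/-- Coordinate formula for a linear combination of the `Tvec`s. -/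
lemma sum_smul_Tvec_apply (G : SimpleGraph V) [DecidableRel G.Adj] (r : ℕ) (g : V → ℤ)
    (u : V) :
    (∑ v, g v • Tvec G r v) u
      = (r : ℤ) * ((∑ v ∈ G.neighborFinset u, g v) - (G.degree u : ℤ) * g u) := by
  rw [Finset.sum_apply]
  have : ∀ v ∈ Finset.univ, (g v • Tvec G r v) u
      = (if v = u then -(g u * ((G.degree u : ℤ) * (r : ℤ))) else 0)
        + (if G.Adj u v then g v * (r : ℤ) else 0) := by
    intro v _
    rw [Pi.smul_apply, smul_eq_mul, Tvec_apply_eq]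
  rw [Finset.sum_congr rfl this, Finset.sum_add_distrib, Finset.sum_ite_eq' Finset.univ u,
    if_pos (Finset.mem_univ u), ← Finset.sum_filter, ← SimpleGraph.neighborFinset_eq_filter,
    ← Finset.sum_mul]
  ring

/-- The sum of all the `Tvec`s vanishes. -/
lemma sum_Tvec (G : SimpleGraph V) [DecidableRel G.Adj] (r : ℕ) :
    (∑ v, Tvec G r v) = 0 := by
  funext u
  have h := sum_smul_Tvec_apply G r (fun _ => (1 : ℤ)) u
  simp only [one_smul] at h
  rw [h, Finset.sum_const, SimpleGraph.card_neighborFinset_eq_degree]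
  simp

/-- Express the sum of the images of a list via counts. -/
lemma list_map_sum_eq (g : V → V → ℤ) (l : List V) :
    (l.map g).sum = ∑ v, (l.count v : ℤ) • g v := by
  induction l with
  | nil => simp
  | cons a t ih =>
      simp only [List.map_cons, List.sum_cons, ih, List.count_cons, beq_iff_eq]
      have : ∀ v, ((t.count v + if a = v then 1 else 0 : ℕ) : ℤ) • g v
          = (t.count v : ℤ) • g v + (if v = a then g v else 0) := by
        intro v
        rcases eq_or_ne a v with h | h
        · subst h; simp [add_smul]
        · simp [h, Ne.symm h]
      rw [Finset.sum_congr rfl fun v _ => this v, Finset.sum_add_distrib,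
        Finset.sum_ite_eq' Finset.univ a, if_pos (Finset.mem_univ a)]
      ring

lemma list_length_eq_sum_count (l : List V) :
    (l.length : ℤ) = ∑ v, (l.count v : ℤ) := by
  induction l with
  | nil => simp
  | cons a t ih =>
      simp only [List.length_cons, List.count_cons, beq_iff_eq]
      push_cast
      rw [Finset.sum_add_distrib]
      have : (∑ v : V, if a = v then (1 : ℤ) else 0) = 1 := by
        rw [Finset.sum_ite_eq Finset.univ a (fun _ => (1 : ℤ)), if_pos (Finset.mem_univ a)]
      rw [this, ih]

/-- Key consequence of the tree (connectivity) hypothesis: two lists whose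
`Tvec`-sums agree have counts differing by a constant. -/
lemma counts_diff_const (G : SimpleGraph V) [DecidableRel G.Adj] (hG : G.IsTree)
    {r : ℕ} (hr : 0 < r) (l l' : List V)
    (h : (l'.map (Tvec G r)).sum = (l.map (Tvec G r)).sum) :
    ∃ k : ℤ, ∀ v, (l.count v : ℤ) = (l'.count v : ℤ) + k := by
  set g : V → ℤ := fun v => (l.count v : ℤ) - (l'.count v : ℤ) with hg
  have hzero : (∑ v, g v • Tvec G r v) = 0 := by
    rw [list_map_sum_eq, list_map_sum_eq] at h
    simp only [hg, sub_smul, Finset.sum_sub_distrib, h, sub_self]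
  have hharm : ∀ u, ∑ v ∈ G.neighborFinset u, g v = (G.degree u : ℤ) * g u := by
    intro u
    have := congrFun hzero u
    rw [sum_smul_Tvec_apply] at this
    simp only [Pi.zero_apply] at this
    have hr' : (r : ℤ) ≠ 0 := Int.natCast_ne_zero.mpr hr.ne'
    have := mul_eq_zero.mp this
    rcases this with h1 | h1
    · exact absurd h1 hr'
    · linarith [sub_eq_zero.mp h1]
  have hconst := harmonic_const G hG.isConnected.preconnected g hharm
  haveI : Nonempty V := hG.isConnected.nonempty
  obtain ⟨v0⟩ := ‹Nonempty V›
  refine ⟨g v0, fun v => ?_⟩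
  have := hconst v v0
  simp only [hg] at this ⊢
  linarith

end Aux

/-- Proposition `min-paths`, type II case: a path
`P(w, v₁,…,v_m)` (with endpoint `w + ∑ T_{v_i}`) is minimal among paths from `w`
to its endpoint if and only if not every vertex of `Γ` occurs among the `v_i`;
moreover a minimal path is unique up to reordering: any path with the same
endpoint and the same length has the same underlying multiset of vertices. -/
theorem stmt_5 {V : Type*} [Fintype V] [DecidableEq V] (G : SimpleGraph V)
    [DecidableRel G.Adj] (hG : G.IsTree) (r : ℕ) (hr : 0 < r)
    (w : V → ℤ) (l : List V) :
    ((∀ l' : List V, (l'.map (Tvec G r)).sum = (l.map (Tvec G r)).sum →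
        l.length ≤ l'.length) ↔ ∃ v : V, v ∉ l) ∧
    ((∀ l' : List V, (l'.map (Tvec G r)).sum = (l.map (Tvec G r)).sum →
        l.length ≤ l'.length) →
      ∀ l' : List V, (l'.map (Tvec G r)).sum = (l.map (Tvec G r)).sum →
        l'.length = l.length → (l : Multiset V) = (l' : Multiset V)) := by
  haveI : Nonempty V := hG.isConnected.nonempty
  have cardpos : 0 < Fintype.card V := Fintype.card_pos
  constructor
  · constructor
    · -- minimal → some vertex missing
      intro hmin
      by_contra hall
      push_neg at hall
      -- remove one copy of each vertex
      set m : Multiset V := (l : Multiset V) - (Finset.univ.val : Multiset V) with hm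
      set l' : List V := m.toList with hl'
      have hcount : ∀ v : V, (l'.count v : ℤ) = (l.count v : ℤ) - 1 := by
        intro v
        have h1 : l'.count v = m.count v := by
          rw [hl', ← Multiset.coe_count, Multiset.coe_toList]
        have h2 : Multiset.count v (Finset.univ.val : Multiset V) = 1 :=
          Multiset.count_eq_one_of_mem Finset.univ.nodup (Finset.mem_univ v)
        have h3 : 1 ≤ l.count v := List.one_le_count_iff.mpr (hall v)
        rw [h1, hm, Multiset.count_sub, h2, Multiset.coe_count]
        omega
      have hsum : (l'.map (Tvec G r)).sum = (l.map (Tvec G r)).sum := by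
        rw [list_map_sum_eq, list_map_sum_eq]
        have : ∀ v ∈ Finset.univ, (l'.count v : ℤ) • Tvec G r v
            = (l.count v : ℤ) • Tvec G r v - Tvec G r v := by
          intro v _
          rw [hcount v, sub_smul, one_smul]
        rw [Finset.sum_congr rfl this, Finset.sum_sub_distrib, sum_Tvec, sub_zero]
      have hlen : (l'.length : ℤ) = (l.length : ℤ) - Fintype.card V := by
        rw [list_length_eq_sum_count, list_length_eq_sum_count,
          Finset.sum_congr rfl fun v _ => hcount v, Finset.sum_sub_distrib]
        simp [Finset.card_univ]
      have := hmin l' hsum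
      have : (l.length : ℤ) ≤ (l'.length : ℤ) := by exact_mod_cast this
      omega
    · -- some vertex missing → minimal
      rintro ⟨v0, hv0⟩ l' hsum
      obtain ⟨k, hk⟩ := counts_diff_const G hG hr l l' hsum
      have hc0 : l.count v0 = 0 := List.count_eq_zero.mpr hv0
      have hkle : k ≤ 0 := by
        have := hk v0
        rw [hc0] at this
        have : k = -(l'.count v0 : ℤ) := by push_cast at this ⊢; linarith
        rw [this]
        simp [neg_nonpos]
      have h1 : (l.length : ℤ) = (l'.length : ℤ) + Fintype.card V * k := by
        rw [list_length_eq_sum_count, list_length_eq_sum_count,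
          Finset.sum_congr rfl fun v _ => hk v, Finset.sum_add_distrib,
          Finset.sum_const, Finset.card_univ, nsmul_eq_mul]
      have : (l.length : ℤ) ≤ (l'.length : ℤ) := by nlinarith
      exact_mod_cast this
  · -- uniqueness up to reordering
    intro _ l' hsum hlen
    obtain ⟨k, hk⟩ := counts_diff_const G hG hr l l' hsum
    have h1 : (l.length : ℤ) = (l'.length : ℤ) + Fintype.card V * k := by
      rw [list_length_eq_sum_count, list_length_eq_sum_count,
        Finset.sum_congr rfl fun v _ => hk v, Finset.sum_add_distrib,
        Finset.sum_const, Finset.card_univ, nsmul_eq_mul]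
    have hk0 : k = 0 := by
      have : (l'.length : ℤ) = (l.length : ℤ) := by exact_mod_cast hlen
      have hcv : (0 : ℤ) < Fintype.card V := by exact_mod_cast cardpos
      nlinarith
    ext v
    rw [Multiset.coe_count, Multiset.coe_count]
    have := hk v
    rw [hk0, add_zero] at this
    exact_mod_cast this
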